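/- Let 0 < a < 1, 0 < q ≤ ∞, δ > 0, and let (ε_k)_{k∈ℕ₀} be a sequence of nonnegative real numbers with ‖(ε_k)‖_{ℓ^q} = I < ∞. Define δ_k = ∑_{j=0}^∞ a^{|k−j|δ} ε_j. Then (δ_k)_{k∈ℕ₀} ∈ ℓ^q and ‖(δ_k)‖_{ℓ^q} ≤ c·I, where c depends only on a, δ, and q. -/

import Mathlib

open scoped ENNReal

/-- The `ℓ^q` (quasi-)norm of a sequence of nonnegative reals, for `0 < q ≤ ∞`. -/
noncomputable def lqNorm (q : ℝ≥0∞) (e : ℕ → ℝ) : ℝ≥0∞ :=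
  if q = ⊤ then ⨆ k, ENNReal.ofReal (e k)
  else (∑' k : ℕ, ENNReal.ofReal (e k) ^ q.toReal) ^ (1 / q.toReal)

private lemma aux_natDist (k j : ℕ) : |(k : ℝ) - (j : ℝ)| = (Nat.dist k j : ℝ) := by
  rcases le_total j k with h | h
  · rw [Nat.dist_eq_sub_of_le_right h, Nat.cast_sub h,
      abs_of_nonneg (sub_nonneg.2 (by exact_mod_cast h))]
  · rw [Nat.dist_eq_sub_of_le h, Nat.cast_sub h, abs_sub_comm,
      abs_of_nonneg (sub_nonneg.2 (by exact_mod_cast h))]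

private lemma aux_geo_le (r : ℝ≥0∞) (k : ℕ) :
    ∑' j : ℕ, r ^ Nat.dist k j ≤ 2 * ∑' n : ℕ, r ^ n := by
  have h1 := Summable.tsum_add_tsum_compl (f := fun j : ℕ => r ^ Nat.dist k j)
    (s := {j : ℕ | j ≤ k}) ENNReal.summable ENNReal.summable
  rw [← h1, two_mul]
  have hleft : ∑' x : {j : ℕ | j ≤ k}, r ^ Nat.dist k (x : ℕ) ≤ ∑' n : ℕ, r ^ n := by
    have hinj : Function.Injective (fun x : {j : ℕ | j ≤ k} => k - (x : ℕ)) := by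
      rintro ⟨x, hx⟩ ⟨y, hy⟩ h
      simp only [Set.mem_setOf_eq] at hx hy
      simp only [Subtype.mk.injEq]
      dsimp only at h
      omega
    have := ENNReal.tsum_comp_le_tsum_of_injective hinj (fun n => r ^ n)
    refine le_trans (le_of_eq (tsum_congr fun x => ?_)) this
    have hx : (x : ℕ) ≤ k := x.2
    rw [Nat.dist_eq_sub_of_le_right hx]
  have hright : ∑' x : ↑({j : ℕ | j ≤ k}ᶜ), r ^ Nat.dist k (x : ℕ) ≤ ∑' n : ℕ, r ^ n := by
    have hinj : Function.Injective (fun x : ↑({j : ℕ | j ≤ k}ᶜ) => (x : ℕ) - k) := by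
      rintro ⟨x, hx⟩ ⟨y, hy⟩ h
      simp only [Set.mem_compl_iff, Set.mem_setOf_eq, not_le] at hx hy
      simp only [Subtype.mk.injEq]
      dsimp only at h
      omega
    have := ENNReal.tsum_comp_le_tsum_of_injective hinj (fun n => r ^ n)
    refine le_trans (le_of_eq (tsum_congr fun x => ?_)) this
    have hx : k ≤ (x : ℕ) := by
      have := x.2
      simp only [Set.mem_compl_iff, Set.mem_setOf_eq, not_le] at this
      omega
    rw [Nat.dist_eq_sub_of_le hx]
  exact add_le_add hleft hright

private lemma aux_kernel_le {A : ℝ≥0∞} (t : ℝ) (k : ℕ) :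
    ∑' j : ℕ, A ^ ((Nat.dist k j : ℝ) * t) ≤ 2 * (1 - A ^ t)⁻¹ := by
  have h : ∀ j : ℕ, A ^ ((Nat.dist k j : ℝ) * t) = (A ^ t) ^ Nat.dist k j := fun j => by
    rw [mul_comm, ENNReal.rpow_mul, ← ENNReal.rpow_natCast]
  calc ∑' j : ℕ, A ^ ((Nat.dist k j : ℝ) * t) = ∑' j : ℕ, (A ^ t) ^ Nat.dist k j :=
        tsum_congr h
    _ ≤ 2 * ∑' n : ℕ, (A ^ t) ^ n := aux_geo_le _ k
    _ = 2 * (1 - A ^ t)⁻¹ := by rw [ENNReal.tsum_geometric]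

private lemma aux_fin_rpow {p : ℝ} (hp : 0 < p) (hp1 : p ≤ 1) (f : ℕ → ℝ≥0∞) (s : Finset ℕ) :
    (∑ i ∈ s, f i) ^ p ≤ ∑ i ∈ s, f i ^ p := by
  classical
  induction s using Finset.induction with
  | empty => simp [ENNReal.zero_rpow_of_pos hp]
  | insert _ _ h ih =>
      rw [Finset.sum_insert h, Finset.sum_insert h]
      exact le_trans (ENNReal.rpow_add_le_add_rpow _ _ hp.le hp1) (add_le_add le_rfl ih)

private lemma aux_tsum_rpow {p : ℝ} (hp : 0 < p) (hp1 : p ≤ 1) (f : ℕ → ℝ≥0∞) :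
    (∑' i, f i) ^ p ≤ ∑' i, f i ^ p := by
  have key : ∑' i, f i ≤ (∑' i, f i ^ p) ^ (1 / p) := by
    rw [ENNReal.tsum_eq_iSup_sum]
    refine iSup_le fun s => ?_
    have h1 : (∑ i ∈ s, f i) ^ p ≤ ∑' i, f i ^ p :=
      le_trans (aux_fin_rpow hp hp1 f s) (ENNReal.sum_le_tsum s)
    calc ∑ i ∈ s, f i = ((∑ i ∈ s, f i) ^ p) ^ (1 / p) := by
          rw [← ENNReal.rpow_mul, mul_one_div, div_self hp.ne', ENNReal.rpow_one]
      _ ≤ (∑' i, f i ^ p) ^ (1 / p) := ENNReal.rpow_le_rpow h1 (by positivity)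
  calc (∑' i, f i) ^ p ≤ ((∑' i, f i ^ p) ^ (1 / p)) ^ p := ENNReal.rpow_le_rpow key hp.le
    _ = ∑' i, f i ^ p := by
        rw [← ENNReal.rpow_mul, one_div, inv_mul_cancel₀ hp.ne', ENNReal.rpow_one]

private lemma aux_holder {p p' : ℝ} (hpq : p'.HolderConjugate p) (f g : ℕ → ℝ≥0∞) :
    ∑' j, f j * g j ≤ (∑' j, f j ^ p') ^ (1 / p') * (∑' j, g j ^ p) ^ (1 / p) := by
  have := ENNReal.lintegral_mul_le_Lp_mul_Lq (μ := MeasureTheory.Measure.count) hpq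
    (f := f) (g := g) (measurable_of_countable f).aemeasurable
    (measurable_of_countable g).aemeasurable
  simpa only [MeasureTheory.lintegral_count, Pi.mul_apply] using this

/-- Let `0 < a < 1`, `0 < q ≤ ∞`, `δ > 0`. If `(ε_k)` is a nonnegative sequence with finite
`ℓ^q`-norm `I`, then the sequence `δ_k = ∑_j a^{|k−j|δ} ε_j` belongs to `ℓ^q` with norm
`≤ c·I`, where `c` depends only on `a`, `δ` and `q`. -/
theorem lq_convolution_bound (a : ℝ) (ha₀ : 0 < a) (ha₁ : a < 1)
    (q : ℝ≥0∞) (hq : 0 < q) (δ : ℝ) (hδ : 0 < δ) :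
    ∃ c : ℝ≥0∞, c ≠ ⊤ ∧ ∀ e : ℕ → ℝ, (∀ k, 0 ≤ e k) → lqNorm q e ≠ ⊤ →
      lqNorm q (fun k => ∑' j : ℕ, a ^ (|(k : ℝ) - (j : ℝ)| * δ) * e j) ≤
        c * lqNorm q e := by
  set A : ℝ≥0∞ := ENNReal.ofReal a with hA
  have hA0 : A ≠ 0 := (ENNReal.ofReal_pos.2 ha₀).ne'
  have hAT : A ≠ ⊤ := ENNReal.ofReal_ne_top
  have hA1 : A < 1 := by
    rw [hA, ← ENNReal.ofReal_one]
    exact (ENNReal.ofReal_lt_ofReal_iff zero_lt_one).2 ha₁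
  -- the kernel constant
  set C : ℝ → ℝ≥0∞ := fun t => 2 * (1 - A ^ t)⁻¹ with hCdef
  have hCne : ∀ t : ℝ, 0 < t → C t ≠ ⊤ := by
    intro t ht
    have h1 : A ^ t < 1 := ENNReal.rpow_lt_one hA1 ht
    have h2 : (1 : ℝ≥0∞) - A ^ t ≠ 0 := by
      intro h
      exact absurd (tsub_eq_zero_iff_le.1 h) (not_le.2 h1)
    exact ENNReal.mul_ne_top (by simp) (ENNReal.inv_ne_top.2 h2)
  -- pointwise bound of the `ofReal` of the convolution
  have hpt : ∀ (e : ℕ → ℝ), (∀ k, 0 ≤ e k) → ∀ k : ℕ,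
      ENNReal.ofReal (∑' j : ℕ, a ^ (|(k : ℝ) - (j : ℝ)| * δ) * e j) ≤
        ∑' j : ℕ, A ^ ((Nat.dist k j : ℝ) * δ) * ENNReal.ofReal (e j) := by
    intro e he k
    have hterm : ∀ j : ℕ, ENNReal.ofReal (a ^ (|(k : ℝ) - (j : ℝ)| * δ) * e j) =
        A ^ ((Nat.dist k j : ℝ) * δ) * ENNReal.ofReal (e j) := fun j => by
      rw [ENNReal.ofReal_mul (Real.rpow_nonneg ha₀.le _), ENNReal.ofReal_rpow_of_pos ha₀,
        aux_natDist]
    by_cases hs : Summable (fun j : ℕ => a ^ (|(k : ℝ) - (j : ℝ)| * δ) * e j)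
    · rw [ENNReal.ofReal_tsum_of_nonneg
        (fun j => mul_nonneg (Real.rpow_nonneg ha₀.le _) (he j)) hs]
      exact le_of_eq (tsum_congr hterm)
    · rw [tsum_eq_zero_of_not_summable hs]
      simp
  rcases eq_or_ne q ⊤ with rfl | hqT
  · -- case q = ∞
    refine ⟨C δ, hCne δ hδ, ?_⟩
    intro e he _
    simp only [lqNorm, if_pos rfl]
    refine iSup_le fun k => ?_
    refine le_trans (hpt e he k) ?_
    calc ∑' j : ℕ, A ^ ((Nat.dist k j : ℝ) * δ) * ENNReal.ofReal (e j)
        ≤ ∑' j : ℕ, A ^ ((Nat.dist k j : ℝ) * δ) * ⨆ i, ENNReal.ofReal (e i) :=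
          ENNReal.tsum_le_tsum fun j => mul_le_mul_right (le_iSup (fun i => ENNReal.ofReal (e i)) j) _
      _ = (∑' j : ℕ, A ^ ((Nat.dist k j : ℝ) * δ)) * ⨆ i, ENNReal.ofReal (e i) :=
          ENNReal.tsum_mul_right
      _ ≤ C δ * ⨆ i, ENNReal.ofReal (e i) := mul_le_mul_left (aux_kernel_le δ k) _
  · -- case q finite
    set p : ℝ := q.toReal with hpdef
    have hp : 0 < p := ENNReal.toReal_pos hq.ne' hqT
    rcases le_or_gt p 1 with hp1 | hp1
    · -- subcase p ≤ 1
      refine ⟨(C (δ * p)) ^ (1 / p), ENNReal.rpow_ne_top_of_nonneg (by positivity)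
        (hCne _ (by positivity)), ?_⟩
      intro e he _
      simp only [lqNorm, if_neg hqT, ← hpdef]
      have key : ∑' k : ℕ, ENNReal.ofReal (∑' j : ℕ, a ^ (|(k : ℝ) - (j : ℝ)| * δ) * e j) ^ p ≤
          C (δ * p) * ∑' j : ℕ, ENNReal.ofReal (e j) ^ p := by
        calc ∑' k : ℕ, ENNReal.ofReal (∑' j : ℕ, a ^ (|(k : ℝ) - (j : ℝ)| * δ) * e j) ^ p
            ≤ ∑' k : ℕ, (∑' j : ℕ, A ^ ((Nat.dist k j : ℝ) * δ) * ENNReal.ofReal (e j)) ^ p :=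
              ENNReal.tsum_le_tsum fun k => ENNReal.rpow_le_rpow (hpt e he k) hp.le
          _ ≤ ∑' k : ℕ, ∑' j : ℕ, (A ^ ((Nat.dist k j : ℝ) * δ) * ENNReal.ofReal (e j)) ^ p :=
              ENNReal.tsum_le_tsum fun k => aux_tsum_rpow hp hp1 _
          _ = ∑' k : ℕ, ∑' j : ℕ, A ^ ((Nat.dist k j : ℝ) * (δ * p)) * ENNReal.ofReal (e j) ^ p := by
              refine tsum_congr fun k => tsum_congr fun j => ?_
              rw [ENNReal.mul_rpow_of_nonneg _ _ hp.le, ← ENNReal.rpow_mul, mul_assoc]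
          _ = ∑' j : ℕ, ∑' k : ℕ, A ^ ((Nat.dist k j : ℝ) * (δ * p)) * ENNReal.ofReal (e j) ^ p :=
              ENNReal.tsum_comm
          _ ≤ ∑' j : ℕ, C (δ * p) * ENNReal.ofReal (e j) ^ p := by
              refine ENNReal.tsum_le_tsum fun j => ?_
              rw [ENNReal.tsum_mul_right]
              refine mul_le_mul_left ?_ _
              have h := aux_kernel_le (A := A) (δ * p) j
              refine le_trans (le_of_eq (tsum_congr fun k => ?_)) h
              rw [Nat.dist_comm]
          _ = C (δ * p) * ∑' j : ℕ, ENNReal.ofReal (e j) ^ p := ENNReal.tsum_mul_left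
      calc (∑' k : ℕ, ENNReal.ofReal (∑' j : ℕ, a ^ (|(k : ℝ) - (j : ℝ)| * δ) * e j) ^ p) ^ (1/p)
          ≤ (C (δ * p) * ∑' j : ℕ, ENNReal.ofReal (e j) ^ p) ^ (1/p) :=
            ENNReal.rpow_le_rpow key (by positivity)
        _ = (C (δ * p)) ^ (1/p) * (∑' j : ℕ, ENNReal.ofReal (e j) ^ p) ^ (1/p) :=
            ENNReal.mul_rpow_of_nonneg _ _ (by positivity)
    · -- subcase 1 < p : use Hölder's inequality
      set p' : ℝ := Real.conjExponent p with hp'def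
      have hpq : p.HolderConjugate p' := Real.HolderConjugate.conjExponent hp1
      have hpq' : p'.HolderConjugate p := hpq.symm
      have hp'0 : 0 < p' := hpq'.pos
      refine ⟨((C δ) ^ (1 / p' * p) * C δ) ^ (1 / p),
        ENNReal.rpow_ne_top_of_nonneg (by positivity)
          (ENNReal.mul_ne_top (ENNReal.rpow_ne_top_of_nonneg (by positivity) (hCne δ hδ))
            (hCne δ hδ)), ?_⟩
      intro e he _
      simp only [lqNorm, if_neg hqT, ← hpdef]
      -- Hölder bound for each k
      have hTk : ∀ k : ℕ, (∑' j : ℕ, A ^ ((Nat.dist k j : ℝ) * δ) * ENNReal.ofReal (e j)) ^ p ≤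
          (C δ) ^ (1 / p' * p) *
            ∑' j : ℕ, A ^ ((Nat.dist k j : ℝ) * δ) * ENNReal.ofReal (e j) ^ p := by
        intro k
        set K : ℕ → ℝ≥0∞ := fun j => A ^ ((Nat.dist k j : ℝ) * δ) with hK
        have hKne0 : ∀ j, K j ≠ 0 := fun j =>
          (ENNReal.rpow_pos (lt_of_le_of_ne (zero_le (a := A)) (Ne.symm hA0)) hAT).ne'
        have hKneT : ∀ j, K j ≠ ⊤ := fun j =>
          ENNReal.rpow_ne_top_of_nonneg (by positivity) hAT
        have hsplit : ∀ j, K j * ENNReal.ofReal (e j) =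
            (K j ^ (1 / p')) * (K j ^ (1 / p) * ENNReal.ofReal (e j)) := by
          intro j
          rw [← mul_assoc, ← ENNReal.rpow_add _ _ (hKne0 j) (hKneT j)]
          rw [show 1 / p' + 1 / p = 1 by
            have := hpq'.inv_add_inv_eq_one
            rw [one_div, one_div]
            linarith]
          rw [ENNReal.rpow_one]
        have hH := aux_holder hpq' (fun j => K j ^ (1 / p'))
          (fun j => K j ^ (1 / p) * ENNReal.ofReal (e j))
        have h1 : ∑' j, (K j ^ (1 / p')) ^ p' = ∑' j, K j := by
          refine tsum_congr fun j => ?_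
          rw [← ENNReal.rpow_mul, one_div, inv_mul_cancel₀ hp'0.ne', ENNReal.rpow_one]
        have h2 : ∑' j, (K j ^ (1 / p) * ENNReal.ofReal (e j)) ^ p =
            ∑' j, K j * ENNReal.ofReal (e j) ^ p := by
          refine tsum_congr fun j => ?_
          rw [ENNReal.mul_rpow_of_nonneg _ _ hp.le, ← ENNReal.rpow_mul, one_div,
            inv_mul_cancel₀ hp.ne', ENNReal.rpow_one]
        rw [h1, h2] at hH
        have hsum : ∑' j, K j * ENNReal.ofReal (e j) =
            ∑' j, (K j ^ (1 / p')) * (K j ^ (1 / p) * ENNReal.ofReal (e j)) :=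
          tsum_congr hsplit
        have hbound : ∑' j, K j * ENNReal.ofReal (e j) ≤
            (C δ) ^ (1 / p') * (∑' j, K j * ENNReal.ofReal (e j) ^ p) ^ (1 / p) := by
          rw [hsum]
          refine le_trans hH (mul_le_mul_left ?_ _)
          exact ENNReal.rpow_le_rpow (aux_kernel_le δ k) (by positivity)
        calc (∑' j : ℕ, K j * ENNReal.ofReal (e j)) ^ p
            ≤ ((C δ) ^ (1 / p') * (∑' j, K j * ENNReal.ofReal (e j) ^ p) ^ (1 / p)) ^ p :=
              ENNReal.rpow_le_rpow hbound hp.le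
          _ = (C δ) ^ (1 / p' * p) * ∑' j, K j * ENNReal.ofReal (e j) ^ p := by
              have hinv : ∀ x : ℝ≥0∞, (x ^ (1 / p)) ^ p = x := fun x => by
                rw [← ENNReal.rpow_mul, one_div, inv_mul_cancel₀ hp.ne', ENNReal.rpow_one]
              rw [ENNReal.mul_rpow_of_nonneg _ _ hp.le, hinv, ← ENNReal.rpow_mul]
      have key : ∑' k : ℕ, ENNReal.ofReal (∑' j : ℕ, a ^ (|(k : ℝ) - (j : ℝ)| * δ) * e j) ^ p ≤
          (C δ) ^ (1 / p' * p) * C δ * ∑' j : ℕ, ENNReal.ofReal (e j) ^ p := by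
        calc ∑' k : ℕ, ENNReal.ofReal (∑' j : ℕ, a ^ (|(k : ℝ) - (j : ℝ)| * δ) * e j) ^ p
            ≤ ∑' k : ℕ, (∑' j : ℕ, A ^ ((Nat.dist k j : ℝ) * δ) * ENNReal.ofReal (e j)) ^ p :=
              ENNReal.tsum_le_tsum fun k => ENNReal.rpow_le_rpow (hpt e he k) hp.le
          _ ≤ ∑' k : ℕ, (C δ) ^ (1 / p' * p) *
                ∑' j : ℕ, A ^ ((Nat.dist k j : ℝ) * δ) * ENNReal.ofReal (e j) ^ p :=
              ENNReal.tsum_le_tsum hTk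
          _ = (C δ) ^ (1 / p' * p) *
                ∑' k : ℕ, ∑' j : ℕ, A ^ ((Nat.dist k j : ℝ) * δ) * ENNReal.ofReal (e j) ^ p :=
              ENNReal.tsum_mul_left
          _ = (C δ) ^ (1 / p' * p) *
                ∑' j : ℕ, ∑' k : ℕ, A ^ ((Nat.dist k j : ℝ) * δ) * ENNReal.ofReal (e j) ^ p := by
              rw [ENNReal.tsum_comm]
          _ ≤ (C δ) ^ (1 / p' * p) * ∑' j : ℕ, C δ * ENNReal.ofReal (e j) ^ p := by
              refine mul_le_mul_right (ENNReal.tsum_le_tsum fun j => ?_) _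
              rw [ENNReal.tsum_mul_right]
              refine mul_le_mul_left ?_ _
              have h := aux_kernel_le (A := A) δ j
              refine le_trans (le_of_eq (tsum_congr fun k => ?_)) h
              rw [Nat.dist_comm]
          _ = (C δ) ^ (1 / p' * p) * C δ * ∑' j : ℕ, ENNReal.ofReal (e j) ^ p := by
              rw [ENNReal.tsum_mul_left]; ring
      calc (∑' k : ℕ, ENNReal.ofReal (∑' j : ℕ, a ^ (|(k : ℝ) - (j : ℝ)| * δ) * e j) ^ p) ^ (1/p)
          ≤ ((C δ) ^ (1 / p' * p) * C δ * ∑' j : ℕ, ENNReal.ofReal (e j) ^ p) ^ (1/p) :=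
            ENNReal.rpow_le_rpow key (by positivity)
        _ = ((C δ) ^ (1 / p' * p) * C δ) ^ (1/p) * (∑' j : ℕ, ENNReal.ofReal (e j) ^ p) ^ (1/p) :=
            ENNReal.mul_rpow_of_nonneg _ _ (by positivity)
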